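/- arXiv:1306.3305 — 3 statements merged into one kernel-verified Lean document; each statement's English description precedes it below -/
import Mathlib

section
/- Let $e_1,\ldots,e_{2k}$ be the edges of an even cycle in a finite simple graph $G$, and $a_{e_i} = \mathbf{1}_{v_i} + \mathbf{1}_{v_{i+1}} \in \mathbb{Z}^{V(G)}$ (indices mod $2k$). Then any real linear combination $x = \sum_{i=1}^{2k} r_i a_{e_i}$ with $r_i \in \mathbb{R}$ that lies in $\mathbb{Z}^{V(G)}$ actually lies in the subgroup $\mathbb{Z}\text{-span}\{a_{e_1},\ldots,a_{e_{2k}}\}$. In other words, $\mathbb{R}\text{-span}\{a_{e_i}\} \cap \mathbb{Z}^{V(G)} = \mathbb{Z}\text{-span}\{a_{e_i}\}$. -/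
/-- For the edge vectors `a_{e_1}, …, a_{e_{2k}}` of an even cycle of a finite
simple graph, `ℝ-span{a_{e_i}} ∩ ℤ^V = ℤ-span{a_{e_i}}`: every real linear combination of the
`a_{e_i}` having all integer coordinates is an integer linear combination of the `a_{e_i}`. -/
theorem stmt2 {V : Type*} [Fintype V] [DecidableEq V] (G : SimpleGraph V) (k : ℕ) (hk : 0 < k)
    (v : Fin (2 * k) → V) (hinj : Function.Injective v)
    (hadj : ∀ i : Fin (2 * k), G.Adj (v i) (v (i + ⟨1, by omega⟩)))
    (a : Fin (2 * k) → V → ℝ)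
    (ha : ∀ i : Fin (2 * k), a i = fun x =>
      (if x = v i then (1 : ℝ) else 0) + (if x = v (i + ⟨1, by omega⟩) then 1 else 0)) :
    ∀ x : V → ℝ, x ∈ Submodule.span ℝ (Set.range a) → (∀ u : V, ∃ m : ℤ, x u = m) →
      ∃ z : Fin (2 * k) → ℤ, x = ∑ i : Fin (2 * k), (z i : ℝ) • a i := by
  haveI : NeZero (2 * k) := ⟨by omega⟩
  have hval1 : ((1 : Fin (2 * k)) : ℕ) = 1 := by
    rw [Fin.val_one']
    exact Nat.mod_eq_of_lt (by omega)
  have hone : (⟨1, by omega⟩ : Fin (2 * k)) = 1 := by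
    apply Fin.ext
    rw [hval1]
  rw [hone] at ha
  intro x hx hint
  obtain ⟨c, hc⟩ := (Submodule.mem_span_range_iff_exists_fun ℝ).mp hx
  -- evaluation of a sum of edge vectors at a cycle vertex
  have heval : ∀ (d : Fin (2 * k) → ℝ) (j : Fin (2 * k)),
      (∑ i : Fin (2 * k), d i • a i) (v j) = d j + d (j - 1) := by
    intro d j
    rw [Finset.sum_apply]
    have hterm : ∀ i : Fin (2 * k), (d i • a i) (v j) =
        (if i = j then d i else 0) + (if i = j - 1 then d i else 0) := by
      intro i
      rw [ha i]
      have h1 : (v j = v i) = (i = j) := by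
        simp [hinj.eq_iff, eq_comm]
      have h2 : (v j = v (i + 1)) = (i = j - 1) := by
        simp [hinj.eq_iff, eq_comm (a := j), eq_sub_iff_add_eq]
      simp only [Pi.smul_apply, smul_eq_mul, h1, h2, mul_add, mul_ite, mul_one, mul_zero]
    rw [Finset.sum_congr rfl (fun i _ => hterm i), Finset.sum_add_distrib,
      Finset.sum_ite_eq' Finset.univ j d, Finset.sum_ite_eq' Finset.univ (j - 1) d]
    simp
  -- successive coefficients sum to integers
  have hkey : ∀ j : Fin (2 * k), ∃ m : ℤ, c j + c (j - 1) = m := by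
    intro j
    obtain ⟨m, hm⟩ := hint (v j)
    exact ⟨m, by rw [← heval c j, hc, hm]⟩
  -- c n differs from (-1)^n * c 0 by an integer
  have hB : ∀ n : ℕ, ∀ h : n < 2 * k, ∃ m : ℤ, c ⟨n, h⟩ = m + (-1 : ℝ) ^ n * c 0 := by
    intro n
    induction n with
    | zero =>
      intro h
      refine ⟨0, ?_⟩
      have : (⟨0, h⟩ : Fin (2 * k)) = 0 := by apply Fin.ext; simp
      rw [this]; simp
    | succ n ih =>
      intro h
      obtain ⟨m1, hm1⟩ := ih (by omega)
      obtain ⟨m2, hm2⟩ := hkey ⟨n + 1, h⟩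
      have hsub : (⟨n + 1, h⟩ : Fin (2 * k)) - 1 = ⟨n, by omega⟩ := by
        rw [sub_eq_iff_eq_add]
        apply Fin.ext
        rw [Fin.val_add, hval1]
        exact (Nat.mod_eq_of_lt h).symm
      rw [hsub, hm1] at hm2
      refine ⟨m2 - m1, ?_⟩
      have : c ⟨n + 1, h⟩ = (m2 : ℝ) - (m1 + (-1 : ℝ) ^ n * c 0) := by linarith
      rw [this]
      push_cast
      ring
  classical
  choose z hz using fun j : Fin (2 * k) => hB j.val j.isLt
  -- the alternating-sign combination of the a i vanishes
  have hssucc : ∀ i : Fin (2 * k), (-1 : ℝ) ^ ((i + 1 : Fin (2 * k)) : ℕ) = -(-1 : ℝ) ^ (i : ℕ) := by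
    intro i
    have hv : ((i + 1 : Fin (2 * k)) : ℕ) = (i.val + 1) % (2 * k) := by
      rw [Fin.val_add, hval1]
    by_cases hlt : i.val + 1 < 2 * k
    · rw [hv, Nat.mod_eq_of_lt hlt, pow_succ]
      ring
    · have hi : i.val = 2 * k - 1 := by omega
      have hi2 : i.val + 1 = 2 * k := by omega
      have : ((i + 1 : Fin (2 * k)) : ℕ) = 0 := by rw [hv, hi2, Nat.mod_self]
      rw [this, hi]
      have hodd : Odd (2 * k - 1) := ⟨k - 1, by omega⟩
      rw [hodd.neg_one_pow]
      norm_num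
  have hzero : ∀ u : V, ∑ i : Fin (2 * k), ((-1 : ℝ) ^ (i : ℕ)) * a i u = 0 := by
    intro u
    by_cases hu : ∃ j, u = v j
    · obtain ⟨j, rfl⟩ := hu
      have := heval (fun i => (-1 : ℝ) ^ (i : ℕ)) j
      rw [Finset.sum_apply] at this
      simp only [Pi.smul_apply, smul_eq_mul] at this
      rw [this]
      have h1 : (-1 : ℝ) ^ ((j - 1 : Fin (2 * k)) : ℕ) = -(-1 : ℝ) ^ (j : ℕ) := by
        have := hssucc (j - 1)
        rw [sub_add_cancel] at this
        linarith [this]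
      rw [h1]; ring
    · apply Finset.sum_eq_zero
      intro i _
      rw [ha i]
      simp only []
      rw [if_neg (fun h => hu ⟨i, h⟩), if_neg (fun h => hu ⟨i + 1, h⟩)]
      ring
  refine ⟨z, ?_⟩
  funext u
  rw [← hc]
  rw [Finset.sum_apply, Finset.sum_apply]
  have hrw : ∀ i : Fin (2 * k), (c i • a i) u =
      ((z i : ℝ) • a i) u + c 0 * (((-1 : ℝ) ^ (i : ℕ)) * a i u) := by
    intro i
    have hci : c i = (z i : ℝ) + (-1 : ℝ) ^ (i : ℕ) * c 0 := by
      have := hz i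
      rwa [Fin.eta] at this
    simp only [Pi.smul_apply, smul_eq_mul]
    rw [hci]
    ring
  rw [Finset.sum_congr rfl (fun i _ => hrw i), Finset.sum_add_distrib, ← Finset.mul_sum,
    hzero u, mul_zero, add_zero]
end

section
/- Let $n \ge 3$ be odd and $G_r^n$ the graph family from the paper. Every path in $G_r^n$ joining a vertex of one block to a vertex of another block has length at most $(2r-1)(n-1)$ plus at most $n-1$ edges in each endpoint block; more precisely, a path between two vertex-disjoint cycles (blocks) of $G_r^n$ has length at most $(2r-1)(n-1)$. -/
/-- Vertices of the graph `G_r^n` of the paper: a vertex is addressed by a position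
`q ∈ Fin n` on the root `n`-cycle together with a list of at most `r` further positions,
each in `{1, …, n-1}` (encoded as `Fin (n-1)`), recording in which vertex of which
successively attached `n`-cycle it lies.  A vertex with address-tail of length `m < r` is
exactly a degree-two vertex of `G_m^n`, and the unique `n`-cycle attached to it at step
`m+1` has vertices `(q, l ++ [j])`, `j ∈ Fin (n-1)` (position `j+1` on that cycle),
together with the attachment vertex `(q, l)` itself (position `0`). -/
def GVert (n r : ℕ) := Fin n × { l : List (Fin (n - 1)) // l.length ≤ r }

/-- The basic (one-directional) edge relation of `G_r^n`: consecutive vertices on the root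
cycle; the attachment vertex joined to the first (position `1`, i.e. `j = 0`) and last
(position `n-1`, i.e. `j = n-2`) vertex of the cycle attached to it; or consecutive
vertices of an attached cycle. -/
def GRel (n r : ℕ) : GVert n r → GVert n r → Prop := fun a b =>
  (a.2.1 = [] ∧ b.2.1 = [] ∧ (b.1 : ℕ) = ((a.1 : ℕ) + 1) % n) ∨
  (a.1 = b.1 ∧ ∃ j : Fin (n - 1), b.2.1 = a.2.1 ++ [j] ∧ ((j : ℕ) = 0 ∨ (j : ℕ) = n - 2)) ∨
  (a.1 = b.1 ∧ ∃ (l : List (Fin (n - 1))) (j j' : Fin (n - 1)),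
      a.2.1 = l ++ [j] ∧ b.2.1 = l ++ [j'] ∧ (j' : ℕ) = (j : ℕ) + 1)

/-- The graph `G_r^n` of the paper: `G_0^n` is an `n`-cycle and `G_r^n` is obtained from
`G_{r-1}^n` by attaching an `n`-cycle (one-point union) at each degree-two vertex. -/
def Gc (n r : ℕ) : SimpleGraph (GVert n r) where
  Adj a b := a ≠ b ∧ (GRel n r a b ∨ GRel n r b a)
  symm := ⟨fun a b h => ⟨h.1.symm, h.2.symm⟩⟩
  loopless := ⟨fun _ h => h.1 rfl⟩

/-- The blocks of the graph `G_r^n` of the paper: every block is an `n`-cycle, namely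
either the root cycle (encoded by `none`) or the cycle attached (at construction step
`length + 1 ≤ r`) at the degree-two vertex with address `(q, l)` (encoded by `some (q, l)`). -/
def Blk (n r : ℕ) := Option (Fin n × { l : List (Fin (n - 1)) // l.length + 1 ≤ r })

/-- Depth of a block in the block tree of `G_r^n` (root cycle has depth `0`,
the cycle attached at step `s` has depth `s`). -/
def blkDepth {n r : ℕ} : Blk n r → ℕ
  | none => 0
  | some (_, l) => l.1.length + 1

/-- Longest common prefix of two lists. -/
def lcp {α : Type*} [DecidableEq α] : List α → List α → List α
  | a :: as, b :: bs => if a = b then a :: lcp as bs else []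
  | _, _ => []

/-- Depth of the least common ancestor of two blocks in the block tree of `G_r^n`. -/
def blkLCADepth {n r : ℕ} : Blk n r → Blk n r → ℕ
  | some (q, l), some (q', l') => if q = q' then (lcp l.1 l'.1).length + 1 else 0
  | _, _ => 0

/-- The block distance `d(B₁, B₂)`: the number of internal blocks (internal vertices
belonging to the block side of the bipartition) on the unique path joining `B₁` and `B₂`
in the block tree `B(G_r^n)`. -/
def blockDist {n r : ℕ} (b1 b2 : Blk n r) : ℕ :=
  blkDepth b1 + blkDepth b2 - 2 * blkLCADepth b1 b2 - 1

/-- The vertex set of a block of `G_r^n`: the root cycle consists of the vertices with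
empty address-tail; the block attached at `(q, l)` consists of `(q, l)` together with the
vertices `(q, l ++ [j])`. -/
def blockVerts {n r : ℕ} : Blk n r → Set (GVert n r)
  | none => {x | x.2.1 = []}
  | some (q, l) => {x | x.1 = q ∧ (x.2.1 = l.1 ∨ ∃ j : Fin (n - 1), x.2.1 = l.1 ++ [j])}

section Stmt11Aux

variable {n r : ℕ}

instance : DecidableEq (GVert n r) := by unfold GVert; infer_instance

/-- Classification of an oriented edge by the address of the block (cycle) containing it. -/
def eblk (a b : GVert n r) : Option (Fin n × List (Fin (n - 1))) :=
  if a.2.1 = [] ∧ b.2.1 = [] then none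
  else if a.2.1.length < b.2.1.length then some (a.1, a.2.1)
  else if b.2.1.length < a.2.1.length then some (a.1, b.2.1)
  else some (a.1, a.2.1.dropLast)

lemma grel_shape {a b : GVert n r} (h : GRel n r a b) :
    (a.2.1 = [] ∧ b.2.1 = []) ∨
    (a.1 = b.1 ∧ ((∃ j, b.2.1 = a.2.1 ++ [j]) ∨ (∃ j, a.2.1 = b.2.1 ++ [j]) ∨
      (∃ t, ∃ j j' : Fin (n - 1), a.2.1 = t ++ [j] ∧ b.2.1 = t ++ [j']))) := by
  rcases h with ⟨h1, h2, -⟩ | ⟨h1, j, h2, -⟩ | ⟨h1, t, j, j', h2, h3, -⟩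
  · exact Or.inl ⟨h1, h2⟩
  · exact Or.inr ⟨h1, Or.inl ⟨j, h2⟩⟩
  · exact Or.inr ⟨h1, Or.inr (Or.inr ⟨t, j, j', h2, h3⟩)⟩

lemma adj_shape {a b : GVert n r} (h : (Gc n r).Adj a b) :
    (a.2.1 = [] ∧ b.2.1 = []) ∨
    (a.1 = b.1 ∧ ((∃ j, b.2.1 = a.2.1 ++ [j]) ∨ (∃ j, a.2.1 = b.2.1 ++ [j]) ∨
      (∃ t, ∃ j j' : Fin (n - 1), a.2.1 = t ++ [j] ∧ b.2.1 = t ++ [j']))) := by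
  rcases h.2 with h' | h'
  · exact grel_shape h'
  · rcases grel_shape h' with ⟨h1, h2⟩ | ⟨h1, h2⟩
    · exact Or.inl ⟨h2, h1⟩
    · refine Or.inr ⟨h1.symm, ?_⟩
      rcases h2 with ⟨j, hj⟩ | ⟨j, hj⟩ | ⟨t, j, j', hj, hj'⟩
      · exact Or.inr (Or.inl ⟨j, hj⟩)
      · exact Or.inl ⟨j, hj⟩
      · exact Or.inr (Or.inr ⟨t, j', j, hj', hj⟩)

lemma eblk_concat_right {a b : GVert n r} {j : Fin (n - 1)} (hj : b.2.1 = a.2.1 ++ [j]) :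
    eblk a b = some (a.1, a.2.1) := by
  have h1 : ¬(a.2.1 = [] ∧ b.2.1 = []) := by rintro ⟨-, h2⟩; rw [hj] at h2; simp at h2
  have h2 : a.2.1.length < b.2.1.length := by
    rw [hj]; simp only [List.length_append, List.length_cons, List.length_nil]; omega
  unfold eblk; rw [if_neg h1, if_pos h2]

lemma eblk_concat_left {a b : GVert n r} {j : Fin (n - 1)} (hj : a.2.1 = b.2.1 ++ [j]) :
    eblk a b = some (a.1, b.2.1) := by
  have h1 : ¬(a.2.1 = [] ∧ b.2.1 = []) := by rintro ⟨h2, -⟩; rw [hj] at h2; simp at h2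
  have h2 : ¬ a.2.1.length < b.2.1.length := by
    rw [hj]; simp only [List.length_append, List.length_cons, List.length_nil]; omega
  have h3 : b.2.1.length < a.2.1.length := by
    rw [hj]; simp only [List.length_append, List.length_cons, List.length_nil]; omega
  unfold eblk; rw [if_neg h1, if_neg h2, if_pos h3]

lemma eblk_cyc {a b : GVert n r} {t : List (Fin (n - 1))} {j j' : Fin (n - 1)}
    (hj : a.2.1 = t ++ [j]) (hj' : b.2.1 = t ++ [j']) :
    eblk a b = some (a.1, t) := by
  have h1 : ¬(a.2.1 = [] ∧ b.2.1 = []) := by rintro ⟨h2, -⟩; rw [hj] at h2; simp at h2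
  have h2 : ¬ a.2.1.length < b.2.1.length := by
    rw [hj, hj']; simp only [List.length_append, List.length_cons, List.length_nil]; omega
  have h3 : ¬ b.2.1.length < a.2.1.length := by
    rw [hj, hj']; simp only [List.length_append, List.length_cons, List.length_nil]; omega
  unfold eblk
  rw [if_neg h1, if_neg h2, if_neg h3, hj, List.dropLast_concat]

lemma eblk_none_shape {a b : GVert n r} (h : eblk a b = none) :
    a.2.1 = [] ∧ b.2.1 = [] := by
  by_cases hc : a.2.1 = [] ∧ b.2.1 = []
  · exact hc
  · unfold eblk at h
    rw [if_neg hc] at h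
    split at h
    · simp at h
    · split at h <;> simp at h

lemma eblk_some_shape {a b : GVert n r} (h : (Gc n r).Adj a b) {q : Fin n}
    {l : List (Fin (n - 1))} (he : eblk a b = some (q, l)) :
    a.1 = q ∧ b.1 = q ∧
    (a.2.1 = l ∨ ∃ j, a.2.1 = l ++ [j]) ∧ (b.2.1 = l ∨ ∃ j, b.2.1 = l ++ [j]) ∧
    ((∃ j, a.2.1 = l ++ [j]) ∨ (∃ j, b.2.1 = l ++ [j])) := by
  rcases adj_shape h with ⟨h1, h2⟩ | ⟨h1, h2⟩
  · have hnone : eblk a b = none := by unfold eblk; rw [if_pos ⟨h1, h2⟩]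
    rw [hnone] at he; simp at he
  · rcases h2 with ⟨j, hj⟩ | ⟨j, hj⟩ | ⟨t, j, j', hj, hj'⟩
    · rw [eblk_concat_right hj] at he
      simp only [Option.some.injEq, Prod.mk.injEq] at he
      obtain ⟨hq, hl⟩ := he
      exact ⟨hq, h1 ▸ hq, Or.inl hl, Or.inr ⟨j, by rw [hj, hl]⟩, Or.inr ⟨j, by rw [hj, hl]⟩⟩
    · rw [eblk_concat_left hj] at he
      simp only [Option.some.injEq, Prod.mk.injEq] at he
      obtain ⟨hq, hl⟩ := he
      exact ⟨hq, h1 ▸ hq, Or.inr ⟨j, by rw [hj, hl]⟩, Or.inl hl, Or.inl ⟨j, by rw [hj, hl]⟩⟩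
    · rw [eblk_cyc hj hj'] at he
      simp only [Option.some.injEq, Prod.mk.injEq] at he
      obtain ⟨hq, hl⟩ := he
      exact ⟨hq, h1 ▸ hq, Or.inr ⟨j, by rw [hj, hl]⟩, Or.inr ⟨j', by rw [hj', hl]⟩,
        Or.inl ⟨j, by rw [hj, hl]⟩⟩

lemma cross_lemma {a b : GVert n r} (h : (Gc n r).Adj a b) {q : Fin n}
    {l : List (Fin (n - 1))} (ha2 : l <+: a.2.1) (hb : ¬(b.1 = q ∧ l <+: b.2.1))
    (ha1 : a.1 = q) : a.2.1 = l := by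
  rcases adj_shape h with ⟨h1, h2⟩ | ⟨h1, h2⟩
  · rw [h1] at ha2 ⊢
    exact (List.prefix_nil.mp ha2).symm
  · have hbq : b.1 = q := h1 ▸ ha1
    rcases h2 with ⟨j, hj⟩ | ⟨j, hj⟩ | ⟨t, j, j', hj, hj'⟩
    · exact absurd ⟨hbq, by rw [hj]; exact ha2.trans (List.prefix_append _ _)⟩ hb
    · rw [hj] at ha2 ⊢
      rcases List.prefix_concat_iff.mp ha2 with h' | h'
      · exact h'.symm
      · exact absurd ⟨hbq, h'⟩ hb
    · rw [hj] at ha2 ⊢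
      rcases List.prefix_concat_iff.mp ha2 with h' | h'
      · exact h'.symm
      · exact absurd ⟨hbq, by rw [hj']; exact h'.trans (List.prefix_append _ _)⟩ hb

lemma exit_lemma {q : Fin n} {l : List (Fin (n - 1))} :
    ∀ {a b : GVert n r} (w : (Gc n r).Walk a b), (a.1 = q ∧ l <+: a.2.1) →
      ¬(b.1 = q ∧ l <+: b.2.1) → ∃ v ∈ w.support, v.1 = q ∧ v.2.1 = l := by
  intro a b w
  induction w with
  | nil => intro ha hb; exact absurd ha hb
  | @cons u v c hadj w ih =>
    intro ha hb
    by_cases hy : v.1 = q ∧ l <+: v.2.1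
    · obtain ⟨x, hx, hx2⟩ := ih hy hb
      exact ⟨x, by rw [SimpleGraph.Walk.support_cons]; exact List.mem_cons_of_mem _ hx, hx2⟩
    · exact ⟨u, by rw [SimpleGraph.Walk.support_cons]; exact List.mem_cons_self,
        ha.1, cross_lemma hadj ha.2 hy ha.1⟩

lemma endpoint_in_S {a b v : GVert n r} {q : Fin n} {l : List (Fin (n - 1))}
    (p : (Gc n r).Walk a b) (hp : p.IsPath) (hv : v ∈ p.support) (hq : v.1 = q)
    (hl : l <+: v.2.1) (hne : v.2.1 ≠ l) :
    (a.1 = q ∧ l <+: a.2.1) ∨ (b.1 = q ∧ l <+: b.2.1) := by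
  by_contra hc
  obtain ⟨hA, hB⟩ := not_or.mp hc
  obtain ⟨u2, hu2, hu2q, hu2l⟩ := exit_lemma (p.dropUntil v hv) ⟨hq, hl⟩ hB
  obtain ⟨u1, hu1, hu1q, hu1l⟩ := exit_lemma (p.takeUntil v hv).reverse ⟨hq, hl⟩ hA
  rw [SimpleGraph.Walk.support_reverse, List.mem_reverse] at hu1
  have hu12 : u1 = u2 := Prod.ext (hu1q.trans hu2q.symm) (Subtype.ext (hu1l.trans hu2l.symm))
  have hnd : ((p.takeUntil v hv).append (p.dropUntil v hv)).support.Nodup := by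
    rw [SimpleGraph.Walk.take_spec p hv]; exact hp.support_nodup
  rw [SimpleGraph.Walk.support_append] at hnd
  have hdisj := (List.nodup_append.mp hnd).2.2
  have hu2v : u2 ≠ v := fun h => hne (by rw [← h]; exact hu2l)
  have hu2t : u2 ∈ (p.dropUntil v hv).support.tail := by
    have hsc := SimpleGraph.Walk.support_eq_cons (p.dropUntil v hv)
    rw [hsc] at hu2
    rcases List.mem_cons.mp hu2 with h | h
    · exact absurd h hu2v
    · exact h
  exact hdisj u1 hu1 u2 hu2t hu12



lemma support_decomp {V : Type*} {G : SimpleGraph V} {a b : V} (p : G.Walk a b) :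
    ∀ (D1 : List G.Dart) (d : G.Dart) (D2 : List G.Dart),
      p.darts = D1 ++ d :: D2 →
      p.support = D1.map (fun x => x.fst) ++ d.fst :: (d :: D2).map (fun x => x.snd) := by
  induction p with
  | nil => intro D1 d D2 h; simp [SimpleGraph.Walk.darts_nil] at h
  | @cons u v c hadj p ih =>
    intro D1 d D2 h
    rw [SimpleGraph.Walk.darts_cons] at h
    cases D1 with
    | nil =>
      rw [List.nil_append] at h
      injection h with h1 h2
      rw [List.map_nil, List.nil_append, ← h1, List.map_cons]
      rw [SimpleGraph.Walk.support_cons]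
      have : (SimpleGraph.Dart.mk (u, v) hadj).fst = u := rfl
      rw [this]
      congr 1
      have h2' : p.darts = D2 := h2
      rw [← h2', SimpleGraph.Walk.map_snd_darts]
      exact SimpleGraph.Walk.support_eq_cons p
    | cons d1 D1' =>
      rw [List.cons_append] at h
      injection h with h1 h2
      rw [SimpleGraph.Walk.support_cons, ih D1' d D2 h2, ← h1]
      simp

lemma class_count_le (hn : 3 ≤ n) {aa bb : GVert n r} (p : (Gc n r).Walk aa bb)
    (hp : p.IsPath) (k : Option (Fin n × List (Fin (n - 1))))
    (hk : ∃ d ∈ p.darts, eblk d.fst d.snd = k) :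
    (p.darts.filter (fun d => eblk d.fst d.snd == k)).length ≤ n - 1 := by
  classical
  obtain ⟨d0, hd0, hd0k⟩ := hk
  have hmem : d0 ∈ p.darts.filter (fun d => eblk d.fst d.snd == k) :=
    List.mem_filter.mpr ⟨hd0, by simp [hd0k]⟩
  obtain ⟨l0, L', hL⟩ : ∃ l0 L', p.darts.filter (fun d => eblk d.fst d.snd == k) = l0 :: L' := by
    cases hfl : p.darts.filter (fun d => eblk d.fst d.snd == k) with
    | nil => rw [hfl] at hmem; exact absurd hmem List.not_mem_nil
    | cons x xs => exact ⟨x, xs, rfl⟩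
  obtain ⟨D1, D2, hD, hD1, hPl0, hD2⟩ := List.filter_eq_cons_iff.mp hL
  have hsupp := support_decomp p D1 l0 D2 hD
  set W : List (GVert n r) :=
    l0.fst :: l0.snd :: (D2.filter (fun d => eblk d.fst d.snd == k)).map (fun x => x.snd)
    with hW
  have hWsub : List.Sublist W p.support := by
    rw [hsupp, List.map_cons]
    exact ((((List.filter_sublist (l := D2)).map (fun x => x.snd)).cons₂ l0.snd).cons₂ l0.fst).trans
      (List.sublist_append_right _ _)
  have hWnodup : W.Nodup := hWsub.nodup hp.support_nodup
  have hWlen : W.length =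
      (p.darts.filter (fun d => eblk d.fst d.snd == k)).length + 1 := by
    rw [hL, hW]
    simp [hD2]
  have hWmem : ∀ v ∈ W, ∃ d : (Gc n r).Dart, eblk d.fst d.snd = k ∧
      (v = d.fst ∨ v = d.snd) := by
    intro v hv
    rw [hW] at hv
    rcases List.mem_cons.mp hv with rfl | hv'
    · exact ⟨l0, by simpa using hPl0, Or.inl rfl⟩
    rcases List.mem_cons.mp hv' with rfl | hv''
    · exact ⟨l0, by simpa using hPl0, Or.inr rfl⟩
    obtain ⟨d, hd, rfl⟩ := List.mem_map.mp hv''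
    have hdd := List.mem_filter.mp hd
    exact ⟨d, by simpa using hdd.2, Or.inr rfl⟩
  rcases k with _ | ⟨q, l⟩
  · have hform : ∀ v ∈ W, v.2.1 = [] := by
      intro v hv
      obtain ⟨d, hdk, hvd⟩ := hWmem v hv
      have h2 := eblk_none_shape hdk
      rcases hvd with rfl | rfl
      · exact h2.1
      · exact h2.2
    have hmapnd : (W.map (fun v => v.1)).Nodup := by
      refine List.Nodup.map_on ?_ hWnodup
      intro x hx y hy hxy
      exact Prod.ext hxy (Subtype.ext ((hform x hx).trans (hform y hy).symm))
    have hcard := hmapnd.length_le_card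
    rw [List.length_map, Fintype.card_fin] at hcard
    omega
  · have hform : ∀ v ∈ W, v.1 = q ∧ (v.2.1 = l ∨ ∃ j, v.2.1 = l ++ [j]) := by
      intro v hv
      obtain ⟨d, hdk, hvd⟩ := hWmem v hv
      obtain ⟨h1, h2, h3, h4, -⟩ := eblk_some_shape d.adj hdk
      rcases hvd with rfl | rfl
      · exact ⟨h1, h3⟩
      · exact ⟨h2, h4⟩
    have hmapnd : (W.map (fun v => (v.2.1.drop l.length).head?)).Nodup := by
      refine List.Nodup.map_on ?_ hWnodup
      intro x hx y hy hxy
      obtain ⟨hxq, hxl⟩ := hform x hx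
      obtain ⟨hyq, hyl⟩ := hform y hy
      have hxy2 : x.2.1 = y.2.1 := by
        rcases hxl with h | ⟨j, h⟩ <;> rcases hyl with h' | ⟨j', h'⟩ <;>
            rw [h, h'] at hxy ⊢ <;>
            simp only [List.drop_length, List.drop_left, List.head?_nil, List.head?_cons,
              Option.some.injEq, reduceCtorEq] at hxy
        rw [hxy]
      exact Prod.ext (hxq.trans hyq.symm) (Subtype.ext hxy2)
    have hcard := hmapnd.length_le_card
    rw [List.length_map, Fintype.card_option, Fintype.card_fin] at hcard
    omega

end Stmt11Aux


section Stmt11Aux2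

variable {n r : ℕ}

/-- The key of a block, as used by `eblk`. -/
def blkKey : Blk n r → Option (Fin n × List (Fin (n - 1)))
  | none => none
  | some (q, l) => some (q, l.1)

lemma blkKey_inj {B1 B2 : Blk n r} (h : blkKey B1 = blkKey B2) : B1 = B2 := by
  cases B1 with
  | none =>
    cases B2 with
    | none => rfl
    | some y => simp [blkKey] at h
  | some x =>
    cases B2 with
    | none => simp [blkKey] at h
    | some y =>
      obtain ⟨q1, l1⟩ := x
      obtain ⟨q2, l2⟩ := y
      simp only [blkKey, Option.some.injEq, Prod.mk.injEq] at h
      exact congrArg some (Prod.ext h.1 (Subtype.ext h.2))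

lemma blk_exclude {aa bb : GVert n r} {p : (Gc n r).Walk aa bb} (B : Blk n r)
    (hex : ∀ e ∈ p.edges, ¬ ∀ x ∈ e, x ∈ blockVerts B) :
    blkKey B ∉ (p.darts.map (fun d => eblk d.fst d.snd)).toFinset := by
  simp only [List.mem_toFinset, List.mem_map]
  rintro ⟨d, hd, hfd⟩
  have hedge : d.edge ∈ p.edges := List.mem_map_of_mem hd
  refine hex d.edge hedge ?_
  intro x hx
  have hx' : x = d.fst ∨ x = d.snd := Sym2.mem_iff.mp hx
  cases B with
  | none =>
    simp only [blkKey] at hfd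
    have h2 := eblk_none_shape hfd
    rcases hx' with rfl | rfl
    · exact h2.1
    · exact h2.2
  | some x1 =>
    obtain ⟨q1, l1⟩ := x1
    simp only [blkKey] at hfd
    obtain ⟨h1, h2, h3, h4, -⟩ := eblk_some_shape d.adj hfd
    rcases hx' with rfl | rfl
    · exact ⟨h1, h3⟩
    · exact ⟨h2, h4⟩

end Stmt11Aux2


/-- In `G_r^n` (odd `n ≥ 3`, `r ≥ 1`), any path joining a vertex of a block
`B₁` to a vertex of a distinct block `B₂` and using no edge of `B₁` or `B₂` has length at
most `(2r-1)(n-1)`: it passes through at most `2r-1` internal blocks (cycles of length `n`),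
using at most `n-1` edges of each of them. -/
theorem stmt11 (n r : ℕ) (hn : 3 ≤ n) (hodd : Odd n) (hr : 1 ≤ r)
    (B1 B2 : Blk n r) (hB : B1 ≠ B2) {a b : GVert n r}
    (ha : a ∈ blockVerts B1) (hb : b ∈ blockVerts B2)
    (p : (Gc n r).Walk a b) (hp : p.IsPath)
    (hedges : ∀ e ∈ p.edges,
      (¬ ∀ x ∈ e, x ∈ blockVerts B1) ∧ (¬ ∀ x ∈ e, x ∈ blockVerts B2)) :
    p.length ≤ (2 * r - 1) * (n - 1) := by
  set KF : Finset (Option (Fin n × List (Fin (n - 1)))) :=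
    (p.darts.map (fun d => eblk d.fst d.snd)).toFinset with hKF
  -- the length of the path is the sum of the number of edges used in each block
  have hnodupD : p.darts.Nodup := by
    have hedn : (p.darts.map SimpleGraph.Dart.edge).Nodup := hp.1.edges_nodup
    exact hedn.of_map _
  have hsum : p.length = ∑ k ∈ KF,
      (p.darts.toFinset.filter (fun d => eblk d.fst d.snd = k)).card := by
    rw [← SimpleGraph.Walk.length_darts, ← List.toFinset_card_of_nodup hnodupD]
    refine Finset.card_eq_sum_card_fiberwise ?_
    intro d hd
    rw [Finset.mem_coe, List.mem_toFinset] at hd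
    rw [Finset.mem_coe, hKF, List.mem_toFinset]
    exact List.mem_map_of_mem hd
  -- the finsets of candidate blocks near a and b
  have hAfcard : ∀ x : GVert n r,
      (((x.2.1.take (r - 1)).inits.map
        (fun t => (some (x.1, t) : Option (Fin n × List (Fin (n - 1)))))).toFinset).card ≤ r := by
    intro x
    calc (((x.2.1.take (r - 1)).inits.map
          (fun t => (some (x.1, t) : Option (Fin n × List (Fin (n - 1)))))).toFinset).card
        ≤ ((x.2.1.take (r - 1)).inits.map
          (fun t => (some (x.1, t) : Option (Fin n × List (Fin (n - 1)))))).length :=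
          List.toFinset_card_le _
      _ = (x.2.1.take (r - 1)).length + 1 := by rw [List.length_map, List.length_inits]
      _ ≤ r := by rw [List.length_take]; omega
  have hAfmem : ∀ (x : GVert n r) (q : Fin n) (l : List (Fin (n - 1))), x.1 = q →
      l <+: x.2.1 → l.length ≤ r - 1 →
      (some (q, l) : Option (Fin n × List (Fin (n - 1)))) ∈
        ((x.2.1.take (r - 1)).inits.map
          (fun t => (some (x.1, t) : Option (Fin n × List (Fin (n - 1)))))).toFinset := by
    intro x q l h1 h2 h3
    rw [List.mem_toFinset, List.mem_map]
    refine ⟨l, List.mem_inits _ _ |>.mpr (List.prefix_take_iff.mpr ⟨h2, h3⟩), by rw [h1]⟩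
  set Afa := ((a.2.1.take (r - 1)).inits.map
      (fun t => (some (a.1, t) : Option (Fin n × List (Fin (n - 1)))))).toFinset with hAfa
  set Afb := ((b.2.1.take (r - 1)).inits.map
      (fun t => (some (b.1, t) : Option (Fin n × List (Fin (n - 1)))))).toFinset with hAfb
  -- every used block is a common neighborhood block
  have hKFU : KF ⊆ Afa ∪ Afb ∪ {none} := by
    intro k hk
    rw [hKF, List.mem_toFinset, List.mem_map] at hk
    obtain ⟨d, hd, hfd⟩ := hk
    rcases k with _ | ⟨q, l⟩
    · exact Finset.mem_union_right _ (Finset.mem_singleton_self _)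
    obtain ⟨hq1, hq2, hfa, hfb, hwit⟩ := eblk_some_shape d.adj hfd
    obtain ⟨v, hvsup, hvq, j, hj⟩ :
        ∃ v, v ∈ p.support ∧ v.1 = q ∧ ∃ j, v.2.1 = l ++ [j] := by
      rcases hwit with ⟨j, hj⟩ | ⟨j, hj⟩
      · exact ⟨d.fst, p.dart_fst_mem_support_of_mem_darts hd, hq1, j, hj⟩
      · exact ⟨d.snd, p.dart_snd_mem_support_of_mem_darts hd, hq2, j, hj⟩
    have hlen : l.length ≤ r - 1 := by
      have h1 := v.2.2
      rw [hj] at h1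
      simp only [List.length_append, List.length_cons, List.length_nil] at h1
      omega
    have hne : v.2.1 ≠ l := by
      rw [hj]
      intro h
      have := congrArg List.length h
      simp only [List.length_append, List.length_cons, List.length_nil] at this
      omega
    have hpre : l <+: v.2.1 := by rw [hj]; exact List.prefix_append _ _
    rcases endpoint_in_S p hp hvsup hvq hpre hne with ⟨h1, h2⟩ | ⟨h1, h2⟩
    · exact Finset.mem_union_left _ (Finset.mem_union_left _ (hAfmem a q l h1 h2 hlen))
    · exact Finset.mem_union_left _ (Finset.mem_union_right _ (hAfmem b q l h1 h2 hlen))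
  -- the keys of B1, B2 belong to the candidate set but not to KF
  have hkB1U : blkKey B1 ∈ Afa ∪ Afb ∪ {none} := by
    cases B1 with
    | none => exact Finset.mem_union_right _ (Finset.mem_singleton_self _)
    | some x =>
      obtain ⟨q1, l1⟩ := x
      obtain ⟨haq, hal⟩ := ha
      have hpre : l1.1 <+: a.2.1 := by
        rcases hal with h | ⟨j, h⟩
        · rw [h]
        · rw [h]; exact List.prefix_append _ _
      have hlen : l1.1.length ≤ r - 1 := by have := l1.2; omega
      exact Finset.mem_union_left _
        (Finset.mem_union_left _ (hAfmem a q1 l1.1 haq hpre hlen))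
  have hkB2U : blkKey B2 ∈ Afa ∪ Afb ∪ {none} := by
    cases B2 with
    | none => exact Finset.mem_union_right _ (Finset.mem_singleton_self _)
    | some x =>
      obtain ⟨q2, l2⟩ := x
      obtain ⟨hbq, hbl⟩ := hb
      have hpre : l2.1 <+: b.2.1 := by
        rcases hbl with h | ⟨j, h⟩
        · rw [h]
        · rw [h]; exact List.prefix_append _ _
      have hlen : l2.1.length ≤ r - 1 := by have := l2.2; omega
      exact Finset.mem_union_left _
        (Finset.mem_union_right _ (hAfmem b q2 l2.1 hbq hpre hlen))
  have hkB1notin : blkKey B1 ∉ KF := blk_exclude B1 (fun e he => (hedges e he).1)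
  have hkB2notin : blkKey B2 ∉ KF := blk_exclude B2 (fun e he => (hedges e he).2)
  have hkne : blkKey B1 ≠ blkKey B2 := fun h => hB (blkKey_inj h)
  -- counting the blocks
  have hKFcard : KF.card ≤ 2 * r - 1 := by
    have hpairsub : ({blkKey B1, blkKey B2} : Finset _) ⊆ Afa ∪ Afb ∪ {none} := by
      intro x hx
      rcases Finset.mem_insert.mp hx with rfl | hx
      · exact hkB1U
      · rw [Finset.mem_singleton.mp hx]; exact hkB2U
    have hdisj : Disjoint KF ({blkKey B1, blkKey B2} : Finset _) := by
      rw [Finset.disjoint_right]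
      intro x hx hxKF
      rcases Finset.mem_insert.mp hx with rfl | hx
      · exact hkB1notin hxKF
      · rw [Finset.mem_singleton.mp hx] at hxKF; exact hkB2notin hxKF
    have h1 : (KF ∪ {blkKey B1, blkKey B2}).card ≤ (Afa ∪ Afb ∪ {none}).card :=
      Finset.card_le_card (Finset.union_subset hKFU hpairsub)
    rw [Finset.card_union_of_disjoint hdisj, Finset.card_pair hkne] at h1
    have h2 : (Afa ∪ Afb ∪ {none}).card ≤ 2 * r + 1 := by
      calc (Afa ∪ Afb ∪ {none}).card ≤ (Afa ∪ Afb).card + ({none} : Finset _).card :=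
            Finset.card_union_le _ _
        _ ≤ Afa.card + Afb.card + 1 := by
            have := Finset.card_union_le Afa Afb
            rw [Finset.card_singleton]
            omega
        _ ≤ 2 * r + 1 := by
            have h3 := hAfcard a
            have h4 := hAfcard b
            rw [← hAfa] at h3
            rw [← hAfb] at h4
            omega
    omega
  -- conclusion
  rw [hsum]
  have hbound : ∀ k ∈ KF,
      (p.darts.toFinset.filter (fun d => eblk d.fst d.snd = k)).card ≤ n - 1 := by
    intro k hk
    have hsub : p.darts.toFinset.filter (fun d => eblk d.fst d.snd = k) ⊆
        (p.darts.filter (fun d => eblk d.fst d.snd == k)).toFinset := by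
      intro d hd
      rw [Finset.mem_filter, List.mem_toFinset] at hd
      rw [List.mem_toFinset, List.mem_filter]
      exact ⟨hd.1, by simp [hd.2]⟩
    have hkk : ∃ d ∈ p.darts, eblk d.fst d.snd = k := by
      rw [hKF, List.mem_toFinset, List.mem_map] at hk
      exact hk
    calc (p.darts.toFinset.filter (fun d => eblk d.fst d.snd = k)).card
        ≤ ((p.darts.filter (fun d => eblk d.fst d.snd == k)).toFinset).card :=
          Finset.card_le_card hsub
      _ ≤ (p.darts.filter (fun d => eblk d.fst d.snd == k)).length :=
          List.toFinset_card_le _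
      _ ≤ n - 1 := class_count_le hn p hp k hkk
  calc ∑ k ∈ KF, (p.darts.toFinset.filter (fun d => eblk d.fst d.snd = k)).card
      ≤ KF.card • (n - 1) := Finset.sum_le_card_nsmul _ _ _ hbound
    _ = KF.card * (n - 1) := smul_eq_mul _ _
    _ ≤ (2 * r - 1) * (n - 1) := Nat.mul_le_mul_right _ hKFcard
end

section
/- Let $n \ge 3$ be odd and $G_r^n$ the graph family from the paper. Then the maximal degree of a circuit of the toric ideal $I_{G_r^n}$ satisfies $t_{A_{G_r^n}} \le n + (2r-1)(n-1)$. -/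
/-- `c : Fin m → V` lists the vertices of a cycle of length `m` of `G` in order. -/
def IsCycleOn {V : Type*} (G : SimpleGraph V) (m : ℕ) (c : Fin m → V) : Prop :=
  3 ≤ m ∧ Function.Injective c ∧
    ∀ i : Fin m, G.Adj (c i) (c ⟨((i : ℕ) + 1) % m, Nat.mod_lt _ i.pos⟩)

/-- `p : Fin (t+1) → V` lists the vertices of a path of length `t` of `G` in order. -/
def IsPathOn {V : Type*} (G : SimpleGraph V) (t : ℕ) (p : Fin (t + 1) → V) : Prop :=
  Function.Injective p ∧ ∀ i : Fin t, G.Adj (p i.castSucc) (p i.succ)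

namespace Stmt12Aux

/-- snoc prefix dichotomy -/
lemma prefix_snoc {α : Type*} {m l : List α} {j : α} (h : m <+: l ++ [j]) :
    m <+: l ∨ m = l ++ [j] := by
  rcases Nat.lt_or_ge m.length (l ++ [j]).length with hlt | hge
  · left
    have := List.prefix_iff_eq_take.mp h
    rw [this]
    have hle : m.length ≤ l.length := by
      simpa using Nat.lt_succ_iff.mp (by simpa using hlt)
    rw [List.take_append_of_le_length hle]
    exact List.take_prefix _ _
  · right
    exact h.eq_of_length (le_antisymm h.length_le (by simpa using hge))

lemma snoc_inj {α : Type*} {l l' : List α} {j j' : α} (h : l ++ [j] = l' ++ [j']) :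
    l = l' ∧ j = j' := by
  have hlen : l.length = l'.length := by
    have := congrArg List.length h; simpa using this
  have := List.append_inj h hlen
  exact ⟨this.1, by simpa using this.2⟩

variable {n r : ℕ}

/-- blocks -/
abbrev Blk (n : ℕ) := Option (Fin n × List (Fin (n - 1)))

def blkMem (n r : ℕ) : Blk n → GVert n r → Prop
  | none => fun v => v.2.1 = []
  | some qm => fun v => v.1 = qm.1 ∧ (v.2.1 = qm.2 ∨ ∃ j, v.2.1 = qm.2 ++ [j])

def phi (n r : ℕ) : Blk n → GVert n r → ZMod n
  | none => fun v => ((v.1 : ℕ) : ZMod n)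
  | some qm => fun v => if v.2.1 = qm.2 then 0 else
      ((((v.2.1.map (Fin.val)).getLastD 0) + 1 : ℕ) : ZMod n)

lemma phi_base {q : Fin n} {m : List (Fin (n-1))} {v : GVert n r} (h : v.2.1 = m) :
    phi n r (some (q, m)) v = 0 := by simp [phi, h]

lemma phi_snoc {q : Fin n} {m : List (Fin (n-1))} {j : Fin (n-1)} {v : GVert n r}
    (h : v.2.1 = m ++ [j]) : phi n r (some (q, m)) v = (((j : ℕ) + 1 : ℕ) : ZMod n) := by
  have hne : v.2.1 ≠ m := by rw [h]; intro hh; have := congrArg List.length hh; simp at this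
  simp [phi, hne, h]

lemma phi_inj (hn : 3 ≤ n) {blk : Blk n} {x y : GVert n r}
    (hx : blkMem n r blk x) (hy : blkMem n r blk y) (hxy : phi n r blk x = phi n r blk y) :
    x = y := by
  have hn1 : 1 ≤ n - 1 := by omega
  rcases blk with _ | ⟨q, m⟩
  · simp only [blkMem] at hx hy
    simp only [phi] at hxy
    have : (x.1 : ℕ) = (y.1 : ℕ) := by
      have := congrArg ZMod.val hxy
      rwa [ZMod.val_cast_of_lt x.1.isLt, ZMod.val_cast_of_lt y.1.isLt] at this
    apply Prod.ext (Fin.ext this) (Subtype.ext (hx.trans hy.symm))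
  · obtain ⟨hx1, hx2⟩ := hx
    obtain ⟨hy1, hy2⟩ := hy
    have key : x.2.1 = y.2.1 := by
      rcases hx2 with hx2 | ⟨j, hx2⟩ <;> rcases hy2 with hy2 | ⟨j', hy2⟩
      · rw [hx2, hy2]
      · exfalso
        rw [phi_base hx2, phi_snoc hy2] at hxy
        have := congrArg ZMod.val hxy
        rw [ZMod.val_zero, ZMod.val_cast_of_lt (by have := j'.isLt; omega)] at this
        omega
      · exfalso
        rw [phi_base hy2, phi_snoc hx2] at hxy
        have := congrArg ZMod.val hxy
        rw [ZMod.val_zero, ZMod.val_cast_of_lt (by have := j.isLt; omega)] at this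
        omega
      · rw [phi_snoc hx2, phi_snoc hy2] at hxy
        have := congrArg ZMod.val hxy
        rw [ZMod.val_cast_of_lt (by have := j.isLt; omega),
            ZMod.val_cast_of_lt (by have := j'.isLt; omega)] at this
        have : j = j' := Fin.ext (by omega)
        rw [hx2, hy2, this]
    apply Prod.ext (Fin.ext (by rw [hx1, hy1])) (Subtype.ext key)

end Stmt12Aux

namespace Stmt12Aux
variable {n r : ℕ}

lemma blkMem_prefixS {blk : Blk n} {x : GVert n r} (h : blkMem n r blk x) :
    ∀ qm ∈ blk.toFinset, True := fun _ _ => trivial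

/-- each edge lies in a block -/
lemma edge_blk {a b : GVert n r} (h : (Gc n r).Adj a b) :
    ∃ blk, blkMem n r blk a ∧ blkMem n r blk b := by
  have key : ∀ x y : GVert n r, GRel n r x y → ∃ blk, blkMem n r blk x ∧ blkMem n r blk y := by
    intro x y hxy
    rcases hxy with ⟨hx, hy, _⟩ | ⟨hq, j, hy, _⟩ | ⟨hq, l, j, j', hx, hy, _⟩
    · exact ⟨none, hx, hy⟩
    · exact ⟨some (x.1, x.2.1), ⟨rfl, Or.inl rfl⟩, ⟨hq.symm, Or.inr ⟨j, hy⟩⟩⟩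
    · exact ⟨some (x.1, l), ⟨rfl, Or.inr ⟨j, hx⟩⟩, ⟨hq.symm, Or.inr ⟨j', hy⟩⟩⟩
  rcases h.2 with h' | h'
  · exact key a b h'
  · obtain ⟨blk, h1, h2⟩ := key b a h'
    exact ⟨blk, h2, h1⟩

/-- adjacency of two vertices of a block moves the coordinate by one -/
lemma phi_step (hn : 3 ≤ n) {blk : Blk n} {x y : GVert n r}
    (hx : blkMem n r blk x) (hy : blkMem n r blk y) (h : (Gc n r).Adj x y) :
    phi n r blk y = phi n r blk x + 1 ∨ phi n r blk x = phi n r blk y + 1 := by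
  have key : ∀ u w : GVert n r, blkMem n r blk u → blkMem n r blk w → u ≠ w → GRel n r u w →
      phi n r blk w = phi n r blk u + 1 ∨ phi n r blk u = phi n r blk w + 1 := by
    intro u w hu hw hne hrel
    rcases blk with _ | ⟨q, m⟩
    · -- root block
      simp only [blkMem] at hu hw
      rcases hrel with ⟨_, _, hstep⟩ | ⟨_, j, hw2, _⟩ | ⟨_, l, j, j', hu2, _, _⟩
      · left
        simp only [phi]
        have : (((w.1 : ℕ)) : ZMod n) = (((u.1 : ℕ) + 1 : ℕ) : ZMod n) := by
          rw [hstep, ZMod.natCast_mod]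
        rw [this]; push_cast; ring
      · exfalso; rw [hu] at hw2; simp [hw] at hw2
      · exfalso; rw [hu2] at hu; simp at hu
    · obtain ⟨hu1, hu2⟩ := hu
      obtain ⟨hw1, hw2⟩ := hw
      rcases hrel with ⟨hu0, hw0, _⟩ | ⟨_, j, hw3, hj⟩ | ⟨_, l, j, j', hu3, hw3, hj⟩
      · -- root edge inside non-root block: both lists equal m, so u = w : contradiction?
        exact absurd (Prod.ext (hu1.trans hw1.symm) (Subtype.ext (hu0.trans hw0.symm))) hne
      · -- attach edge
        rcases hu2 with hu2 | ⟨j0, hu2⟩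
        · have hwm : w.2.1 = m ++ [j] := by rw [hw3, hu2]
          rw [phi_base hu2, phi_snoc hwm]
          rcases hj with hj | hj
          · left; rw [hj]; norm_num
          · right
            rw [hj]
            have h1 : ((n - 2 + 1 : ℕ) : ZMod n) + 1 = ((n - 2 + 1 + 1 : ℕ) : ZMod n) := by
              push_cast; ring
            rw [h1, show n - 2 + 1 + 1 = n by omega, ZMod.natCast_self]
        · exfalso
          rcases hw2 with hw2 | ⟨j1, hw2⟩
          · rw [hw3, hu2] at hw2
            have := congrArg List.length hw2; simp at this
          · rw [hw3, hu2] at hw2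
            have := congrArg List.length hw2; simp at this
      · -- inner edge
        rcases hu2 with hu2 | ⟨j0, hu2⟩
        · exfalso
          -- u.2.1 = m and = l ++ [j]; w = l ++ [j'] must be m or m ++ [x]
          rw [hu2] at hu3
          rcases hw2 with hw2 | ⟨j1, hw2⟩
          · rw [hw3, hu3] at hw2
            obtain ⟨-, hj'⟩ := snoc_inj hw2
            subst hj'
            omega
          · rw [hw3, hu3] at hw2
            have := congrArg List.length hw2; simp at this
        · have hlm : l = m ∧ j = j0 := by
            rw [hu2] at hu3
            have := snoc_inj hu3
            exact ⟨this.1.symm, this.2.symm⟩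
          obtain ⟨hl, hjj⟩ := hlm
          have hwm : w.2.1 = m ++ [j'] := by rw [hw3, hl]
          have hum : u.2.1 = m ++ [j] := by rw [hu3, hl]
          rw [phi_snoc hum, phi_snoc hwm]
          left
          have : ((j' : ℕ) + 1 : ℕ) = ((j : ℕ) + 1) + 1 := by omega
          rw [this]
          push_cast
          ring
  rcases h.2 with h' | h'
  · exact key x y hx hy h.1 h'
  · rcases key y x hy hx (Ne.symm h.1) h' with h'' | h''
    · right; exact h''
    · left; exact h''

end Stmt12Aux

namespace Stmt12Aux
variable {n r : ℕ}

def inS (q : Fin n) (m : List (Fin (n - 1))) (x : GVert n r) : Prop :=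
  x.1 = q ∧ m <+: x.2.1

/-- cut vertex lemma: an edge leaving `S(q,m)` exits through the vertex with address `m` -/
lemma cut0 {q : Fin n} {m : List (Fin (n - 1))} {a b : GVert n r}
    (h : (Gc n r).Adj a b) (ha : inS q m a) (hb : ¬ inS q m b) : a.2.1 = m := by
  obtain ⟨haq, ham⟩ := ha
  rcases h.2 with hrel | hrel
  · rcases hrel with ⟨ha0, _, _⟩ | ⟨hq, j, hb2, _⟩ | ⟨hq, l, j, j', ha2, hb2, _⟩
    · rw [ha0] at ham ⊢
      exact (List.prefix_nil.mp ham).symm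
    · exact absurd ⟨hq ▸ haq, hb2 ▸ ham.trans (List.prefix_append a.2.1 [j])⟩ hb
    · rw [ha2] at ham
      rcases prefix_snoc ham with hml | hme
      · exact absurd ⟨hq ▸ haq, hb2 ▸ hml.trans (List.prefix_append l [j'])⟩ hb
      · rw [ha2, hme]
  · rcases hrel with ⟨_, ha0, _⟩ | ⟨hq, j, ha2, _⟩ | ⟨hq, l, j, j', hb2, ha2, _⟩
    · rw [ha0] at ham ⊢
      exact (List.prefix_nil.mp ham).symm
    · rw [ha2] at ham
      rcases prefix_snoc ham with hml | hme
      · exact absurd ⟨hq.trans haq, hml⟩ hb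
      · rw [ha2, hme]
    · rw [ha2] at ham
      rcases prefix_snoc ham with hml | hme
      · exact absurd ⟨hq ▸ haq, hb2 ▸ hml.trans (List.prefix_append l [j])⟩ hb
      · rw [ha2, hme]

/-- crossing out of `S' = S \\ {v}` lands on `v`  -/
lemma cut1 {q : Fin n} {m : List (Fin (n - 1))} {v a b : GVert n r}
    (hv : v.1 = q) (hvm : v.2.1 = m)
    (h : (Gc n r).Adj a b) (ha : inS q m a ∧ a ≠ v) (hb : ¬ (inS q m b ∧ b ≠ v)) : b = v := by
  by_cases hbS : inS q m b
  · by_contra hbv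
    exact hb ⟨hbS, hbv⟩
  · have := cut0 h ha.1 hbS
    exact absurd (Prod.ext (ha.1.1.trans hv.symm) (Subtype.ext (this.trans hvm.symm))) ha.2

lemma exists_step (P : ℕ → Prop) {a b : ℕ} (hab : a ≤ b) (ha : P a) (hb : ¬ P b) :
    ∃ k, a ≤ k ∧ k < b ∧ P k ∧ ¬ P (k + 1) := by
  by_contra hcon
  push_neg at hcon
  apply hb
  have : ∀ j, a ≤ j → j ≤ b → P j := by
    intro j hj
    induction j, hj using Nat.le_induction with
    | base => intro _; exact ha
    | succ k hk ih =>
      intro hkb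
      exact hcon k hk (by omega) (ih (by omega))
  exact this b hab le_rfl

end Stmt12Aux

namespace Stmt12Aux
variable {n r : ℕ}

/-- A path cannot enter and leave `S(q,m) \ {v}`. -/
lemma pathCut {t : ℕ} {p : Fin (t + 1) → GVert n r}
    (hinj : Function.Injective p)
    (hadj : ∀ i : Fin t, (Gc n r).Adj (p i.castSucc) (p i.succ))
    {q : Fin n} {m : List (Fin (n - 1))} {v : GVert n r}
    (hv : v.1 = q) (hvm : v.2.1 = m)
    {a : ℕ} (hat : a ≤ t)
    (haS : inS q m (p ⟨a, by omega⟩) ∧ p ⟨a, by omega⟩ ≠ v)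
    (h0 : ¬ (inS q m (p ⟨0, by omega⟩) ∧ p ⟨0, by omega⟩ ≠ v))
    (hT : ¬ (inS q m (p ⟨t, by omega⟩) ∧ p ⟨t, by omega⟩ ≠ v)) : False := by
  set pp : ℕ → GVert n r := fun k => p ⟨min k t, by omega⟩ with hpp
  have hadj' : ∀ k, k < t → (Gc n r).Adj (pp k) (pp (k + 1)) := by
    intro k hk
    have h1 : pp k = p (Fin.castSucc ⟨k, hk⟩) := by
      simp only [hpp]; congr 1; exact Fin.ext (by simp [Nat.min_eq_left (by omega : k ≤ t)])
    have h2 : pp (k + 1) = p (Fin.succ ⟨k, hk⟩) := by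
      simp only [hpp]; congr 1; exact Fin.ext (by simp [Nat.min_eq_left (by omega : k + 1 ≤ t)])
    rw [h1, h2]; exact hadj ⟨k, hk⟩
  have hmin : ∀ k (hk : k ≤ t), pp k = p ⟨k, by omega⟩ := by
    intro k hk; simp only [hpp]; congr 1; exact Fin.ext (by simp [Nat.min_eq_left hk])
  have hPa : inS q m (pp a) ∧ pp a ≠ v := by rw [hmin a hat]; exact haS
  have hP0 : ¬ (inS q m (pp 0) ∧ pp 0 ≠ v) := by rw [hmin 0 (by omega)]; exact h0
  have hPt : ¬ (inS q m (pp t) ∧ pp t ≠ v) := by rw [hmin t le_rfl]; exact hT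
  obtain ⟨k1, hk1a, hk1b, hk1P, hk1P'⟩ :=
    exists_step (fun k => ¬ (inS q m (pp k) ∧ pp k ≠ v)) (Nat.zero_le a) hP0 (by simpa using hPa)
  obtain ⟨k2, hk2a, hk2b, hk2P, hk2P'⟩ :=
    exists_step (fun k => inS q m (pp k) ∧ pp k ≠ v) hat hPa hPt
  push_neg at hk1P'
  have e1 : pp k1 = v := cut1 hv hvm ((hadj' k1 (by omega)).symm) hk1P' hk1P
  have e2 : pp (k2 + 1) = v := cut1 hv hvm (hadj' k2 (by omega)) hk2P hk2P'
  have : p ⟨k1, by omega⟩ = p ⟨k2 + 1, by omega⟩ := by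
    rw [← hmin k1 (by omega), ← hmin (k2 + 1) (by omega), e1, e2]
  have := Fin.mk.injEq _ _ _ _ ▸ hinj this
  omega

/-- A cycle meeting `S(q,m) \ {v}` lies in `S(q,m)`. -/
lemma cycleCut {m0 : ℕ} {c : Fin m0 → GVert n r} (hm3 : 3 ≤ m0)
    (hinj : Function.Injective c)
    (hadj : ∀ i : Fin m0, (Gc n r).Adj (c i) (c ⟨((i : ℕ) + 1) % m0, Nat.mod_lt _ i.pos⟩))
    {q : Fin n} {m : List (Fin (n - 1))} {v : GVert n r}
    (hv : v.1 = q) (hvm : v.2.1 = m)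
    {a0 b0 : Fin m0} (haS : inS q m (c a0) ∧ c a0 ≠ v) (hbS : ¬ inS q m (c b0)) : False := by
  have hm0 : 0 < m0 := by omega
  set w : ℕ → GVert n r := fun k => c ⟨k % m0, Nat.mod_lt _ hm0⟩ with hw
  have hadjw : ∀ k, (Gc n r).Adj (w k) (w (k + 1)) := by
    intro k
    have := hadj ⟨k % m0, Nat.mod_lt _ hm0⟩
    have he : ((k % m0) + 1) % m0 = (k + 1) % m0 := by
      conv_rhs => rw [← Nat.mod_add_mod]
    simpa only [hw, he] using this
  have hwmod : ∀ k, w (k + m0) = w k := by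
    intro k; simp only [hw]; congr 1; exact Fin.ext (by simp [Nat.add_mod_right])
  have hne : (a0 : ℕ) ≠ (b0 : ℕ) := by
    intro h
    have hb0a0 : b0 = a0 := Fin.ext h.symm
    rw [hb0a0] at hbS
    exact hbS haS.1
  set A : ℕ := (a0 : ℕ) with hA
  set B : ℕ := if (a0 : ℕ) < (b0 : ℕ) then (b0 : ℕ) else (b0 : ℕ) + m0 with hB
  have ha0 : (a0 : ℕ) < m0 := a0.isLt
  have hb0 : (b0 : ℕ) < m0 := b0.isLt
  have hAB : A < B := by rw [hA, hB]; split <;> omega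
  have hBA : B < A + m0 := by rw [hA, hB]; split <;> omega
  have hwA : w A = c a0 := by simp only [hw]; congr 1; exact Fin.ext (by simp [hA, Nat.mod_eq_of_lt ha0])
  have hwB : w B = c b0 := by
    simp only [hw]; congr 1; apply Fin.ext
    rw [hB]; split
    · simp [Nat.mod_eq_of_lt hb0]
    · simp [Nat.add_mod_right, Nat.mod_eq_of_lt hb0]
  have hPA : inS q m (w A) ∧ w A ≠ v := by rw [hwA]; exact haS
  have hPB : ¬ (inS q m (w B) ∧ w B ≠ v) := by rw [hwB]; intro h; exact hbS h.1
  have hPA' : inS q m (w (A + m0)) ∧ w (A + m0) ≠ v := by rw [hwmod A, hwA]; exact haS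
  obtain ⟨k2, hk2a, hk2b, hk2P, hk2P'⟩ :=
    exists_step (fun k => inS q m (w k) ∧ w k ≠ v) (le_of_lt hAB) hPA hPB
  obtain ⟨k1, hk1a, hk1b, hk1P, hk1P'⟩ :=
    exists_step (fun k => ¬ (inS q m (w k) ∧ w k ≠ v)) (le_of_lt hBA) hPB (by simpa using hPA')
  push_neg at hk1P'
  have e1 : w k1 = v := cut1 hv hvm ((hadjw k1).symm) hk1P' hk1P
  have e2 : w (k2 + 1) = v := cut1 hv hvm (hadjw k2) hk2P hk2P'
  have hmeq : (k1 : ℕ) % m0 = (k2 + 1) % m0 := by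
    have : c ⟨k1 % m0, Nat.mod_lt _ hm0⟩ = c ⟨(k2 + 1) % m0, Nat.mod_lt _ hm0⟩ := by
      show w k1 = w (k2 + 1)
      rw [e1, e2]
    have := hinj this
    exact congrArg Fin.val this
  -- k2 + 1 ≤ k1 < k2 + 1 + m0 and congruent mod m0 ⇒ equal
  have hle : k2 + 1 ≤ k1 := by omega
  have hlt : k1 < k2 + 1 + m0 := by omega
  have hdvd : m0 ∣ k1 - (k2 + 1) := (Nat.modEq_iff_dvd' hle).mp (Nat.ModEq.symm hmeq)
  rcases Nat.eq_zero_or_pos (k1 - (k2 + 1)) with hz | hpos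
  · -- k1 = k2 + 1, so k1 = B, hence w B = v, contradicting hbS
    have hk1B : k1 = B := by omega
    have : c b0 = v := by rw [← hwB, ← hk1B]; exact e1
    exact hbS (this ▸ ⟨hv, hvm ▸ List.prefix_refl m⟩)
  · exact absurd (Nat.eq_zero_of_dvd_of_lt hdvd (by omega)) (by omega)

end Stmt12Aux

namespace Stmt12Aux

lemma zcyc {n m : ℕ} (hn : 3 ≤ n) (hm : 3 ≤ m) (ψ : Fin m → ZMod n)
    (hinj : Function.Injective ψ)
    (hstep : ∀ i : Fin m, ψ ⟨((i : ℕ) + 1) % m, Nat.mod_lt _ i.pos⟩ = ψ i + 1 ∨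
      ψ i = ψ ⟨((i : ℕ) + 1) % m, Nat.mod_lt _ i.pos⟩ + 1) :
    m = n ∧ Function.Surjective ψ := by
  haveI : NeZero n := ⟨by omega⟩
  have hm0 : 0 < m := by omega
  -- range is closed under +1
  have hclosed : ∀ z, (∃ i, ψ i = z) → ∃ i, ψ i = z + 1 := by
    rintro z ⟨i, hi⟩
    by_contra hz1
    push_neg at hz1
    set iP : Fin m := ⟨((i : ℕ) + 1) % m, Nat.mod_lt _ i.pos⟩ with hip
    set iM : Fin m := ⟨((i : ℕ) + (m - 1)) % m, Nat.mod_lt _ hm0⟩ with him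
    have hsuccM : (⟨((iM : ℕ) + 1) % m, Nat.mod_lt _ iM.pos⟩ : Fin m) = i := by
      apply Fin.ext
      show (((i : ℕ) + (m - 1)) % m + 1) % m = (i : ℕ)
      rw [Nat.mod_add_mod]
      have : (i : ℕ) + (m - 1) + 1 = (i : ℕ) + m := by omega
      rw [this, Nat.add_mod_right, Nat.mod_eq_of_lt i.isLt]
    have hP2 : ψ iP = z - 1 := by
      rcases hstep i with h | h
      · exact absurd (by rw [h, hi]) (hz1 iP)
      · rw [hi] at h; rw [eq_sub_iff_add_eq, ← h]
    have hM2 : ψ iM = z - 1 := by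
      rcases hstep iM with h | h
      · rw [hsuccM, hi] at h
        rw [eq_sub_iff_add_eq, ← h]
      · rw [hsuccM, hi] at h
        exact absurd (by rw [← h]) (hz1 iM)
    have := hinj (hP2.trans hM2.symm)
    rw [hip, him] at this
    have heq : ((i : ℕ) + 1) % m = ((i : ℕ) + (m - 1)) % m := congrArg Fin.val this
    have hle : (i : ℕ) + 1 ≤ (i : ℕ) + (m - 1) := by omega
    have hdvd : m ∣ ((i : ℕ) + (m - 1)) - ((i : ℕ) + 1) := (Nat.modEq_iff_dvd' hle).mp heq
    have : (i : ℕ) + (m - 1) - ((i : ℕ) + 1) = m - 2 := by omega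
    rw [this] at hdvd
    have := Nat.le_of_dvd (by omega) hdvd
    omega
  have hsurj : Function.Surjective ψ := by
    have hk : ∀ k : ℕ, ∃ i, ψ i = ψ ⟨0, hm0⟩ + k := by
      intro k
      induction k with
      | zero => exact ⟨⟨0, hm0⟩, by simp⟩
      | succ k ih =>
        obtain ⟨i, hi⟩ := hclosed _ ih
        exact ⟨i, by rw [hi]; push_cast; ring⟩
    intro z
    obtain ⟨i, hi⟩ := hk (z - ψ ⟨0, hm0⟩).val
    refine ⟨i, ?_⟩
    rw [hi, ZMod.natCast_val, ZMod.cast_id]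
    ring
  constructor
  · have h1 : m ≤ n := by
      have := Fintype.card_le_of_injective ψ hinj
      simpa [ZMod.card] using this
    have h2 : n ≤ m := by
      have := Fintype.card_le_of_surjective ψ hsurj
      simpa [ZMod.card] using this
    omega
  · exact hsurj

end Stmt12Aux

namespace Stmt12Aux
variable {n r : ℕ}

lemma prefix_len_le {m L : List (Fin (n - 1))} (h : m <+: L) (hL : L.length ≤ m.length + 1) :
    L = m ∨ ∃ j, L = m ++ [j] := by
  obtain ⟨tl, htl⟩ := h
  rcases tl with _ | ⟨x, _ | ⟨y, tl⟩⟩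
  · left; rw [← htl]; simp
  · right; exact ⟨x, htl.symm⟩
  · exfalso; rw [← htl] at hL
    simp only [List.length_append, List.length_cons] at hL; omega

lemma fromBlock (hn : 3 ≤ n) {m0 : ℕ} {c : Fin m0 → GVert n r} (hm3 : 3 ≤ m0)
    (hinj : Function.Injective c)
    (hadj : ∀ i : Fin m0, (Gc n r).Adj (c i) (c ⟨((i : ℕ) + 1) % m0, Nat.mod_lt _ i.pos⟩))
    {blk : Blk n} (hmem : ∀ i, blkMem n r blk (c i)) :
    m0 = n ∧ (∀ x, blkMem n r blk x → ∃ i, c i = x) := by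
  set ψ : Fin m0 → ZMod n := fun i => phi n r blk (c i) with hψ
  have hinjψ : Function.Injective ψ := by
    intro i i' h
    exact hinj (phi_inj hn (hmem i) (hmem i') h)
  have hstepψ : ∀ i : Fin m0, ψ ⟨((i : ℕ) + 1) % m0, Nat.mod_lt _ i.pos⟩ = ψ i + 1 ∨
      ψ i = ψ ⟨((i : ℕ) + 1) % m0, Nat.mod_lt _ i.pos⟩ + 1 := by
    intro i
    rcases phi_step hn (hmem i) (hmem _) (hadj i) with h | h
    · left; exact h
    · right; exact h
  obtain ⟨hmn, hsurj⟩ := zcyc hn hm3 ψ hinjψ hstepψ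
  refine ⟨hmn, fun x hx => ?_⟩
  obtain ⟨i, hi⟩ := hsurj (phi n r blk x)
  exact ⟨i, phi_inj hn (hmem i) hx hi⟩

/-- Every cycle of `Gc n r` fills exactly one block, and has length `n`. -/
lemma cycBlk (hn : 3 ≤ n) {m0 : ℕ} {c : Fin m0 → GVert n r} (hm3 : 3 ≤ m0)
    (hinj : Function.Injective c)
    (hadj : ∀ i : Fin m0, (Gc n r).Adj (c i) (c ⟨((i : ℕ) + 1) % m0, Nat.mod_lt _ i.pos⟩)) :
    ∃ blk : Blk n, (∀ i, blkMem n r blk (c i)) ∧ m0 = n ∧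
      (∀ x, blkMem n r blk x → ∃ i, c i = x) ∧
      (blk = none ∨ ∃ q mm, blk = some (q, mm) ∧ mm.length + 1 ≤ r) := by
  have hm0 : 0 < m0 := by omega
  obtain ⟨i0, -, hmax⟩ := Finset.exists_max_image (Finset.univ : Finset (Fin m0))
    (fun i => (c i).2.1.length) ⟨⟨0, hm0⟩, Finset.mem_univ _⟩
  rcases List.eq_nil_or_concat ((c i0).2.1) with hnil | ⟨m, j, hcat⟩
  on_goal 2 => rw [List.concat_eq_append] at hcat
  · -- root block
    have hmem : ∀ i, blkMem n r (none : Blk n) (c i) := by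
      intro i
      have := hmax i (Finset.mem_univ _)
      rw [hnil] at this
      simp only [List.length_nil, Nat.le_zero] at this
      exact List.length_eq_zero_iff.mp this
    obtain ⟨h1, h2⟩ := fromBlock hn hm3 hinj hadj hmem
    exact ⟨none, hmem, h1, h2, Or.inl rfl⟩
  · -- attached block (q, m)
    set q : Fin n := (c i0).1 with hq
    have hmr : m.length ≤ r := by
      have := (c i0).2.2
      rw [hcat] at this
      simp at this
      omega
    set v : GVert n r := (q, ⟨m, hmr⟩) with hv
    have hvm : v.2.1 = m := rfl
    have hvq : v.1 = q := rfl
    have hall : ∀ b, inS q m (c b) := by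
      intro b
      by_contra hbS
      refine cycleCut hm3 hinj hadj hvq hvm (a0 := i0) ⟨⟨rfl, ?_⟩, ?_⟩ hbS
      · rw [hcat]; exact List.prefix_append m [j]
      · intro h
        have := congrArg (fun x => x.2.1) h
        simp only [hvm] at this
        rw [hcat] at this
        have := congrArg List.length this
        simp at this
    have hmem : ∀ i, blkMem n r (some (q, m)) (c i) := by
      intro i
      obtain ⟨h1, h2⟩ := hall i
      refine ⟨h1, ?_⟩
      have hlen : (c i).2.1.length ≤ m.length + 1 := by
        have := hmax i (Finset.mem_univ _)
        rw [hcat] at this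
        simpa using this
      exact prefix_len_le h2 hlen
    obtain ⟨h1, h2⟩ := fromBlock hn hm3 hinj hadj hmem
    refine ⟨some (q, m), hmem, h1, h2, Or.inr ⟨q, m, rfl, ?_⟩⟩
    have := (c i0).2.2
    rw [hcat] at this
    simpa using this

end Stmt12Aux

namespace Stmt12Aux
variable {n r : ℕ}

def strAnc : Blk n → Finset (Blk n)
  | none => ∅
  | some qm => (Finset.range qm.2.length).image (fun k => some (qm.1, qm.2.take k))

lemma card_strAnc (blk : Blk n) (hd : blk = none ∨ ∃ q mm, blk = some (q, mm) ∧ mm.length + 1 ≤ r) :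
    (strAnc blk).card ≤ r - 1 := by
  rcases hd with h | ⟨q, mm, h, hlen⟩
  · subst h; simp [strAnc]
  · subst h
    calc (strAnc (some (q, mm))).card ≤ (Finset.range mm.length).card :=
          Finset.card_image_le
    _ = mm.length := Finset.card_range _
    _ ≤ r - 1 := by omega

lemma mem_strAnc {q : Fin n} {mm mm1 : List (Fin (n - 1))} {q1 : Fin n}
    (hq : q = q1) (hpre : mm <+: mm1) (hne : mm ≠ mm1) :
    (some (q, mm) : Blk n) ∈ strAnc (some (q1, mm1)) := by
  subst hq
  have hlt : mm.length < mm1.length := by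
    rcases Nat.lt_or_ge mm.length mm1.length with h | h
    · exact h
    · exact absurd (hpre.eq_of_length (le_antisymm hpre.length_le h)) hne
  simp only [strAnc, Finset.mem_image, Finset.mem_range]
  exact ⟨mm.length, hlt, by rw [← List.prefix_iff_eq_take.mp hpre]⟩

/-- `S(q,mm) \ {v}` misses the block `α` unless `(q,mm)` is a weak ancestor of `α`. -/
lemma disjS {q : Fin n} {mm : List (Fin (n - 1))} {v x : GVert n r} {α : Blk n}
    (hv : v.1 = q) (hvm : v.2.1 = mm)
    (hW : ¬ ∃ q1 mm1, α = some (q1, mm1) ∧ q = q1 ∧ mm <+: mm1)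
    (hS : inS q mm x) (hxv : x ≠ v) (hα : blkMem n r α x) : False := by
  obtain ⟨hx1, hx2⟩ := hS
  rcases α with _ | ⟨q1, mm1⟩
  · have hx0 : x.2.1 = [] := hα
    rw [hx0] at hx2
    have : mm = [] := List.prefix_nil.mp hx2
    exact hxv (Prod.ext (hx1.trans hv.symm) (Subtype.ext (hx0.trans (by rw [hvm, this]))))
  · obtain ⟨hxq, hxl⟩ := hα
    have hq1 : q = q1 := hx1.symm.trans hxq
    have hnp : ¬ mm <+: mm1 := fun h => hW ⟨q1, mm1, rfl, hq1, h⟩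
    rcases hxl with hxl | ⟨j, hxl⟩
    · rw [hxl] at hx2; exact hnp hx2
    · rw [hxl] at hx2
      rcases prefix_snoc hx2 with h | h
      · exact hnp h
      · exact hxv (Prod.ext (hx1.trans hv.symm) (Subtype.ext (by rw [hxl, ← h, hvm])))

lemma pathBound (hn : 3 ≤ n) (hr : 1 ≤ r) {m1 m2 t : ℕ}
    {c1 : Fin m1 → GVert n r} {c2 : Fin m2 → GVert n r} {p : Fin (t + 1) → GVert n r}
    (h1m : 3 ≤ m1) (h1inj : Function.Injective c1)
    (h1adj : ∀ i : Fin m1, (Gc n r).Adj (c1 i) (c1 ⟨((i : ℕ) + 1) % m1, Nat.mod_lt _ i.pos⟩))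
    (h2m : 3 ≤ m2) (h2inj : Function.Injective c2)
    (h2adj : ∀ i : Fin m2, (Gc n r).Adj (c2 i) (c2 ⟨((i : ℕ) + 1) % m2, Nat.mod_lt _ i.pos⟩))
    (hdisj : Set.range c1 ∩ Set.range c2 = ∅)
    (pinj : Function.Injective p)
    (padj : ∀ i : Fin t, (Gc n r).Adj (p i.castSucc) (p i.succ))
    (hp0 : p 0 ∈ Set.range c1) (hpl : p (Fin.last t) ∈ Set.range c2)
    (hint : ∀ i : Fin (t + 1), i ≠ 0 → i ≠ Fin.last t →
      p i ∉ Set.range c1 ∪ Set.range c2) :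
    t ≤ (2 * r - 1) * (n - 1) := by
  haveI : NeZero n := ⟨by omega⟩
  obtain ⟨α1, hmem1, hm1n, hfull1, hdep1⟩ := cycBlk hn h1m h1inj h1adj
  obtain ⟨α2, hmem2, hm2n, hfull2, hdep2⟩ := cycBlk hn h2m h2inj h2adj
  have hr1 : ∀ x, x ∈ Set.range c1 ↔ blkMem n r α1 x := by
    intro x
    constructor
    · rintro ⟨i, rfl⟩; exact hmem1 i
    · intro h; exact hfull1 x h
  have hr2 : ∀ x, x ∈ Set.range c2 ↔ blkMem n r α2 x := by
    intro x
    constructor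
    · rintro ⟨i, rfl⟩; exact hmem2 i
    · intro h; exact hfull2 x h
  -- indices mapping into the cycles
  have hidx1 : ∀ idx : Fin (t + 1), p idx ∈ Set.range c1 → idx = 0 := by
    intro idx hidx
    by_contra h0
    by_cases hlast : idx = Fin.last t
    · subst hlast
      have : p (Fin.last t) ∈ Set.range c1 ∩ Set.range c2 := ⟨hidx, hpl⟩
      rw [hdisj] at this
      exact this
    · exact hint idx h0 hlast (Or.inl hidx)
  have hidx2 : ∀ idx : Fin (t + 1), p idx ∈ Set.range c2 → idx = Fin.last t := by
    intro idx hidx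
    by_contra hlast
    by_cases h0 : idx = 0
    · subst h0
      have : p 0 ∈ Set.range c1 ∩ Set.range c2 := ⟨hp0, hidx⟩
      rw [hdisj] at this
      exact this
    · exact hint idx h0 hlast (Or.inr hidx)
  -- block of each edge
  have hβex : ∀ i : Fin t, ∃ blk, blkMem n r blk (p i.castSucc) ∧ blkMem n r blk (p i.succ) :=
    fun i => edge_blk (padj i)
  set β : Fin t → Blk n := fun i => (hβex i).choose with hβdef
  have hβ : ∀ i, blkMem n r (β i) (p i.castSucc) ∧ blkMem n r (β i) (p i.succ) :=
    fun i => (hβex i).choose_spec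
  -- no edge lies in the block of either cycle
  have hnot1 : ∀ i : Fin t, β i ≠ α1 := by
    intro i he
    have ha := (hβ i).1
    have hb := (hβ i).2
    rw [he] at ha hb
    have h0a := hidx1 _ ((hr1 _).mpr ha)
    have h0b := hidx1 _ ((hr1 _).mpr hb)
    exact Fin.succ_ne_zero i (h0b)
  have hnot2 : ∀ i : Fin t, β i ≠ α2 := by
    intro i he
    have ha := (hβ i).1
    rw [he] at ha
    have h0a := hidx2 _ ((hr2 _).mpr ha)
    have : (i : ℕ) = t := by
      have := congrArg Fin.val h0a
      simpa using this
    exact absurd this (Nat.ne_of_lt i.isLt)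
  -- main claim: each edge block is a strict ancestor of a cycle block (or the root block)
  have hkey : ∀ i : Fin t, β i ∈ insert (none : Blk n) (strAnc α1 ∪ strAnc α2) := by
    intro i
    rcases hb : β i with _ | ⟨q, mm⟩
    · exact Finset.mem_insert_self _ _
    · refine Finset.mem_insert_of_mem ?_
      have ha := (hβ i).1
      have hbb := (hβ i).2
      rw [hb] at ha hbb
      by_cases hW1 : ∃ q1 mm1, α1 = some (q1, mm1) ∧ q = q1 ∧ mm <+: mm1
      · obtain ⟨q1, mm1, hα1, hqe, hpre⟩ := hW1
        refine Finset.mem_union_left _ ?_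
        rw [hα1]
        refine mem_strAnc hqe hpre ?_
        intro hmme
        exact hnot1 i (by rw [hb, hα1, hqe, hmme])
      · by_cases hW2 : ∃ q1 mm1, α2 = some (q1, mm1) ∧ q = q1 ∧ mm <+: mm1
        · obtain ⟨q1, mm1, hα2, hqe, hpre⟩ := hW2
          refine Finset.mem_union_right _ ?_
          rw [hα2]
          refine mem_strAnc hqe hpre ?_
          intro hmme
          exact hnot2 i (by rw [hb, hα2, hqe, hmme])
        · -- contradiction via the cut lemma
          exfalso
          have hlen : mm.length ≤ r := by
            rcases ha.2 with h | ⟨j, h⟩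
            · have := (p i.castSucc).2.2; rw [h] at this; simpa using this
            · have := (p i.castSucc).2.2; rw [h] at this
              simp only [List.length_append, List.length_cons, List.length_nil] at this
              omega
          set v : GVert n r := (q, ⟨mm, hlen⟩) with hv
          have hvq : v.1 = q := rfl
          have hvm : v.2.1 = mm := rfl
          have hSa : inS q mm (p i.castSucc) := by
            refine ⟨ha.1, ?_⟩
            rcases ha.2 with h | ⟨j, h⟩
            · rw [h]
            · rw [h]; exact List.prefix_append mm [j]
          have hSb : inS q mm (p i.succ) := by
            refine ⟨hbb.1, ?_⟩
            rcases hbb.2 with h | ⟨j, h⟩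
            · rw [h]
            · rw [h]; exact List.prefix_append mm [j]
          have hne : p i.castSucc ≠ p i.succ := by
            intro h
            have := pinj h
            have := congrArg Fin.val this
            simp at this
          have h0' : ¬ (inS q mm (p ⟨0, by omega⟩) ∧ p ⟨0, by omega⟩ ≠ v) := by
            rintro ⟨hS, hxv⟩
            exact disjS hvq hvm hW1 hS hxv ((hr1 _).mp (by convert hp0 using 2 <;> rfl))
          have hT' : ¬ (inS q mm (p ⟨t, by omega⟩) ∧ p ⟨t, by omega⟩ ≠ v) := by
            rintro ⟨hS, hxv⟩
            exact disjS hvq hvm hW2 hS hxv ((hr2 _).mp (by convert hpl using 2 <;> rfl))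
          rcases eq_or_ne (p i.castSucc) v with hva | hva
          · -- then p i.succ ≠ v, use a = i+1
            have hsv : p i.succ ≠ v := by rw [← hva]; exact fun h => hne h.symm
            refine pathCut pinj padj hvq hvm (a := (i : ℕ) + 1) (by omega) ⟨?_, ?_⟩ h0' hT'
            · convert hSb using 2 <;> exact Fin.ext (by simp)
            · convert hsv using 2 <;> exact Fin.ext (by simp)
          · refine pathCut pinj padj hvq hvm (a := (i : ℕ)) (by omega) ⟨?_, ?_⟩ h0' hT'
            · convert hSa using 2 <;> exact Fin.ext (by simp)
            · convert hva using 2 <;> exact Fin.ext (by simp)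
  -- counting
  set allowed : Finset (Blk n) := insert (none : Blk n) (strAnc α1 ∪ strAnc α2) with hallowed
  have hcard : t = ∑ b ∈ allowed, (Finset.univ.filter (fun i => β i = b)).card := by
    calc t = (Finset.univ : Finset (Fin t)).card := (Finset.card_fin t).symm
    _ = ∑ b ∈ allowed, (Finset.univ.filter (fun i => β i = b)).card :=
        Finset.card_eq_sum_card_fiberwise (fun i _ => hkey i)
  have hfiber : ∀ b ∈ allowed, (Finset.univ.filter (fun i => β i = b)).card ≤ n - 1 := by
    intro b _
    set F := Finset.univ.filter (fun i : Fin t => β i = b) with hF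
    rcases F.eq_empty_or_nonempty with hFe | hFne
    · rw [hFe]; simp
    · have hmemF : ∀ i ∈ F, β i = b := by
        intro i hi; exact (Finset.mem_filter.mp hi).2
      set i0 := F.min' hFne with hi0
      have hi0F : i0 ∈ F := F.min'_mem hFne
      set g : Fin t → ZMod n := fun i => phi n r b (p i.succ) with hg
      have hinjg : Set.InjOn g F := by
        intro i hi i' hi' hgii
        have h1 := (hβ i).2
        have h2 := (hβ i').2
        rw [hmemF i hi] at h1
        rw [hmemF i' hi'] at h2
        have := pinj (phi_inj hn h1 h2 hgii)
        exact Fin.succ_injective _ this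
      have himg : (F.image g).card = F.card := Finset.card_image_of_injOn hinjg
      have hnotin : phi n r b (p i0.castSucc) ∉ F.image g := by
        rw [Finset.mem_image]
        rintro ⟨i, hiF, hgi⟩
        have h1 := (hβ i).2
        have h2 := (hβ i0).1
        rw [hmemF i hiF] at h1
        rw [hmemF i0 hi0F] at h2
        have := pinj (phi_inj hn h1 h2 hgi)
        have hval := congrArg Fin.val this
        simp only [Fin.val_succ, Fin.coe_castSucc] at hval
        have := F.min'_le i hiF
        rw [← hi0] at this
        have : (i0 : ℕ) ≤ (i : ℕ) := this
        omega
      have hins : (insert (phi n r b (p i0.castSucc)) (F.image g)).card = F.card + 1 := by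
        rw [Finset.card_insert_of_notMem hnotin, himg]
      have hle : (insert (phi n r b (p i0.castSucc)) (F.image g)).card ≤ n := by
        have := Finset.card_le_univ (insert (phi n r b (p i0.castSucc)) (F.image g))
        simpa [ZMod.card] using this
      omega
  have hallowedcard : allowed.card ≤ 2 * r - 1 := by
    calc allowed.card ≤ (strAnc α1 ∪ strAnc α2).card + 1 := Finset.card_insert_le _ _
    _ ≤ ((strAnc α1).card + (strAnc α2).card) + 1 := by
        have := Finset.card_union_le (strAnc α1) (strAnc α2)
        omega
    _ ≤ ((r - 1) + (r - 1)) + 1 := by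
        have := card_strAnc (r := r) α1 hdep1
        have := card_strAnc (r := r) α2 hdep2
        omega
    _ ≤ 2 * r - 1 := by omega
  calc t = ∑ b ∈ allowed, (Finset.univ.filter (fun i => β i = b)).card := hcard
  _ ≤ ∑ _b ∈ allowed, (n - 1) := Finset.sum_le_sum hfiber
  _ = allowed.card * (n - 1) := by rw [Finset.sum_const, smul_eq_mul]
  _ ≤ (2 * r - 1) * (n - 1) := Nat.mul_le_mul_right _ hallowedcard

end Stmt12Aux


/-- The maximal degree of a circuit of the toric ideal of `G_r^n`
(odd `n ≥ 3`, `r ≥ 1`) is at most `n + (2r-1)(n-1)`.  By Villarreal's characterization a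
circuit is supported on an even cycle (degree `k` for length `2k`), two odd cycles meeting
in exactly one vertex (degree = half the number of edges), or two vertex-disjoint odd
cycles joined by a path of length `t ≥ 1` (degree = half the number of edges with the path
edges counted twice). -/
theorem stmt12 (n r : ℕ) (hn : 3 ≤ n) (hodd : Odd n) (hr : 1 ≤ r) :
    (∀ (k : ℕ) (c : Fin (2 * k) → GVert n r), IsCycleOn (Gc n r) (2 * k) c →
      k ≤ n + (2 * r - 1) * (n - 1)) ∧
    (∀ (m1 m2 : ℕ) (c1 : Fin m1 → GVert n r) (c2 : Fin m2 → GVert n r),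
      IsCycleOn (Gc n r) m1 c1 → IsCycleOn (Gc n r) m2 c2 → Odd m1 → Odd m2 →
      (∃ x, Set.range c1 ∩ Set.range c2 = {x}) →
      (m1 + m2) / 2 ≤ n + (2 * r - 1) * (n - 1)) ∧
    (∀ (m1 m2 t : ℕ) (c1 : Fin m1 → GVert n r) (c2 : Fin m2 → GVert n r)
        (p : Fin (t + 1) → GVert n r),
      IsCycleOn (Gc n r) m1 c1 → IsCycleOn (Gc n r) m2 c2 → Odd m1 → Odd m2 → 1 ≤ t →
      Set.range c1 ∩ Set.range c2 = ∅ →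
      IsPathOn (Gc n r) t p →
      p 0 ∈ Set.range c1 → p (Fin.last t) ∈ Set.range c2 →
      (∀ i : Fin (t + 1), i ≠ 0 → i ≠ Fin.last t →
        p i ∉ Set.range c1 ∪ Set.range c2) →
      (m1 + m2 + 2 * t) / 2 ≤ n + (2 * r - 1) * (n - 1)) := by
  refine ⟨?_, ?_, ?_⟩
  · intro k c hc
    obtain ⟨hm3, hinj, hadj⟩ := hc
    obtain ⟨blk, -, hmn, -, -⟩ := Stmt12Aux.cycBlk hn hm3 hinj hadj
    have hpos : 0 ≤ (2 * r - 1) * (n - 1) := Nat.zero_le _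
    omega
  · intro m1 m2 c1 c2 hc1 hc2 _ _ _
    obtain ⟨hm31, hinj1, hadj1⟩ := hc1
    obtain ⟨hm32, hinj2, hadj2⟩ := hc2
    obtain ⟨blk1, -, hmn1, -, -⟩ := Stmt12Aux.cycBlk hn hm31 hinj1 hadj1
    obtain ⟨blk2, -, hmn2, -, -⟩ := Stmt12Aux.cycBlk hn hm32 hinj2 hadj2
    have hpos : 0 ≤ (2 * r - 1) * (n - 1) := Nat.zero_le _
    omega
  · intro m1 m2 t c1 c2 p hc1 hc2 _ _ ht hdisj hp hp0 hpl hint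
    obtain ⟨hm31, hinj1, hadj1⟩ := hc1
    obtain ⟨hm32, hinj2, hadj2⟩ := hc2
    obtain ⟨pinj, padj⟩ := hp
    obtain ⟨blk1, -, hmn1, -, -⟩ := Stmt12Aux.cycBlk hn hm31 hinj1 hadj1
    obtain ⟨blk2, -, hmn2, -, -⟩ := Stmt12Aux.cycBlk hn hm32 hinj2 hadj2
    have htb : t ≤ (2 * r - 1) * (n - 1) :=
      Stmt12Aux.pathBound hn hr hm31 hinj1 hadj1 hm32 hinj2 hadj2 hdisj pinj padj hp0 hpl hint
    omega
end
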